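/- If every maximal independent set of a connected graph G is robust, and G contains a vertex u on a cycle with two neighbors v1, v2 in the same biconnected component whose neighborhoods differ (N(v1) ≠ N(v2)), and u has no pendant neighbor, then G admits a non-robust maximal independent set — contradiction; hence in such a G all neighbors of u in the component containing the cycle have identical neighborhoods. -/
import Mathlib


open SimpleGraph

variable {V : Type*}

/-- `S` is an independent set in `G`: no two vertices of `S` are adjacent. -/
def Indep (G : SimpleGraph V) (S : Set V) : Prop :=
  ∀ u ∈ S, ∀ v ∈ S, ¬ G.Adj u v

/-- `M` is a maximal independent set of `G` (maximal for inclusion). -/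
def IsMIS (G : SimpleGraph V) (M : Set V) : Prop :=
  Indep G M ∧ ∀ S : Set V, Indep G S → M ⊆ S → S = M

/-- `M` is robust in `G`: it is a maximal independent set of every
connected spanning subgraph of `G`. -/
def RobustMIS (G : SimpleGraph V) (M : Set V) : Prop :=
  ∀ H : SimpleGraph V, H ≤ G → H.Connected → IsMIS H M

/-- A pendant vertex: a vertex with exactly one neighbor. -/
def Pendant (G : SimpleGraph V) (v : V) : Prop :=
  ∃! w, G.Adj v w

/-- `v` lies on a cycle of `G`. -/
def OnCycle (G : SimpleGraph V) (v : V) : Prop :=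
  ∃ p : G.Walk v v, p.IsCycle

/-- `v` has at least one pendant neighbor. -/
def HasPendantNeighbor (G : SimpleGraph V) (v : V) : Prop :=
  ∃ w, G.Adj v w ∧ Pendant G w

/-- A sputnik graph: every vertex on a cycle has a pendant neighbor. -/
def Sputnik (G : SimpleGraph V) : Prop :=
  ∀ v, OnCycle G v → HasPendantNeighbor G v

/-- `G` is a complete bipartite graph with parts `V1`, `V2`. -/
def IsCompleteBipartiteWith (G : SimpleGraph V) (V1 V2 : Set V) : Prop :=
  (∀ v, v ∈ V1 ↔ v ∉ V2) ∧
    (∀ u v, G.Adj u v ↔ ((u ∈ V1 ∧ v ∈ V2) ∨ (u ∈ V2 ∧ v ∈ V1)))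

/-- `G` is a complete bipartite graph. -/
def IsCompleteBipartite (G : SimpleGraph V) : Prop :=
  ∃ V1 V2 : Set V, IsCompleteBipartiteWith G V1 V2

/-- `G` is biconnected: at least three vertices, and removing any
single vertex leaves it connected. -/
def Biconnected (G : SimpleGraph V) : Prop :=
  3 ≤ Nat.card V ∧ ∀ w : V, (G.induce {v | v ≠ w}).Connected

lemma exists_mis (G : SimpleGraph V) (S : Set V) (hS : Indep G S) :
    ∃ M, S ⊆ M ∧ IsMIS G M := by
  have hub : ∀ c ⊆ {T | Indep G T ∧ S ⊆ T}, IsChain (· ⊆ ·) c → c.Nonempty →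
      ∃ ub ∈ {T | Indep G T ∧ S ⊆ T}, ∀ s ∈ c, s ⊆ ub := by
    intro c hc hchain hcne
    refine ⟨⋃₀ c, ⟨?_, ?_⟩, fun s hs => Set.subset_sUnion_of_mem hs⟩
    · rintro a ⟨T1, hT1, ha⟩ b ⟨T2, hT2, hb⟩
      rcases hchain.total hT1 hT2 with h | h
      · exact (hc hT2).1 a (h ha) b hb
      · exact (hc hT1).1 a ha b (h hb)
    · obtain ⟨T, hT⟩ := hcne
      exact (hc hT).2.trans (Set.subset_sUnion_of_mem hT)
  obtain ⟨M, hSM, hmax⟩ := zorn_subset_nonempty {T | Indep G T ∧ S ⊆ T} hub S ⟨hS, subset_rfl⟩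
  exact ⟨M, hSM, hmax.prop.1, fun T hT hMT =>
    le_antisymm (hmax.le_of_ge ⟨hT, hSM.trans hMT⟩ hMT) hMT⟩

lemma walk_aux (G : SimpleGraph V) {z u : V} (q : G.Walk z u) :
    z ≠ u → ∃ y, G.Adj u y ∧ (G.deleteEdges {e : Sym2 V | u ∈ e}).Reachable z y := by
  induction q with
  | nil => exact fun hz => absurd rfl hz
  | @cons a b c h q ih =>
    intro hz
    by_cases hb : b = c
    · subst hb
      exact ⟨a, h.symm, Reachable.refl a⟩
    · obtain ⟨y, hy, hry⟩ := ih hb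
      have hadj : (G.deleteEdges {e : Sym2 V | c ∈ e}).Adj a b := by
        rw [deleteEdges_adj]
        refine ⟨h, ?_⟩
        simp only [Set.mem_setOf_eq, Sym2.mem_iff]
        push_neg
        exact ⟨fun hh => hz hh.symm, fun hh => hb hh.symm⟩
      exact ⟨y, hy, hadj.reachable.trans hry⟩

lemma key (G : SimpleGraph V) (hconn : G.Connected)
    (hrob : ∀ M : Set V, IsMIS G M → RobustMIS G M)
    (u v1 v2 w : V) (hpend : ¬ HasPendantNeighbor G u)
    (h1 : G.Adj u v1) (h2 : G.Adj u v2)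
    (hr : (G.deleteEdges {e : Sym2 V | u ∈ e}).Reachable v1 v2)
    (hw1 : G.Adj v1 w) (hw2 : ¬ G.Adj v2 w) : False := by
  classical
  set G' := G.deleteEdges {e : Sym2 V | u ∈ e} with hG'def
  have hG'adj : ∀ {a b : V}, a ≠ u → b ≠ u → G.Adj a b → G'.Adj a b := by
    intro a b ha hb hab
    rw [hG'def, deleteEdges_adj]
    refine ⟨hab, ?_⟩
    simp only [Set.mem_setOf_eq, Sym2.mem_iff]
    push_neg
    exact ⟨fun h => ha h.symm, fun h => hb h.symm⟩
  have hv1u : v1 ≠ u := h1.ne'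
  have hv2u : v2 ≠ u := h2.ne'
  have hwu : w ≠ u := fun h => hw2 (h ▸ h2.symm)
  -- every neighbor of u has a second neighbor
  have hsec : ∀ a : V, G.Adj u a → ∃ b, G.Adj a b ∧ b ≠ u := by
    intro a ha
    by_contra h
    push_neg at h
    exact hpend ⟨a, ha, u, ha.symm, fun y hy => h y hy⟩
  set mkc : V → G'.ConnectedComponent := G'.connectedComponentMk with hmkc
  set cv : G'.ConnectedComponent := mkc v1 with hcv
  set P : G'.ConnectedComponent → Prop :=
    fun c => ∃ a, G.Adj u a ∧ mkc a = c with hP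
  have hfex : ∀ c : G'.ConnectedComponent, ∃ a : V,
      (P c ∧ c ≠ cv) → (G.Adj u a ∧ mkc a = c) := by
    intro c
    by_cases h : P c ∧ c ≠ cv
    · obtain ⟨⟨a, ha⟩, _⟩ := h; exact ⟨a, fun _ => ha⟩
    · exact ⟨v1, fun hh => absurd hh h⟩
  choose f hf using hfex
  have hgex : ∀ a : V, ∃ b : V, G.Adj u a → (G.Adj a b ∧ b ≠ u) := by
    intro a
    by_cases h : G.Adj u a
    · obtain ⟨b, hb⟩ := hsec a h; exact ⟨b, fun _ => hb⟩
    · exact ⟨u, fun hh => absurd hh h⟩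
  choose g hg using hgex
  have hadjcomp : ∀ {a b : V}, a ≠ u → b ≠ u → G.Adj a b → mkc a = mkc b := by
    intro a b ha hb hab
    exact ConnectedComponent.eq.mpr (hG'adj ha hb hab).reachable
  set B : Set V := {b | ∃ c : G'.ConnectedComponent, (P c ∧ c ≠ cv) ∧ b = g (f c)} with hBdef
  have hBfacts : ∀ b ∈ B, b ≠ u ∧ mkc b ≠ cv ∧ b = g (f (mkc b)) := by
    rintro b ⟨c, hc, rfl⟩
    obtain ⟨hfa, hfc⟩ := hf c hc
    obtain ⟨hgadj, hgne⟩ := hg (f c) hfa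
    have hcb : mkc (g (f c)) = c :=
      ((hadjcomp hfa.ne' hgne hgadj).symm).trans hfc
    refine ⟨hgne, ?_, ?_⟩
    · rw [hcb]; exact hc.2
    · rw [hcb]
  have hv2cv : mkc v2 = cv := (ConnectedComponent.eq.mpr hr).symm
  have hwcv : mkc w = cv := (hadjcomp hv1u hwu hw1).symm
  set S : Set V := insert v2 (insert w B) with hSdef
  have hSindep : Indep G S := by
    intro a ha b hb hab
    rcases ha with rfl | rfl | haB
    · rcases hb with rfl | rfl | hbB
      · exact hab.ne rfl
      · exact hw2 hab
      · exact (hBfacts b hbB).2.1 ((hadjcomp hv2u (hBfacts b hbB).1 hab).symm.trans hv2cv)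
    · rcases hb with rfl | rfl | hbB
      · exact hw2 hab.symm
      · exact hab.ne rfl
      · exact (hBfacts b hbB).2.1 ((hadjcomp hwu (hBfacts b hbB).1 hab).symm.trans hwcv)
    · rcases hb with rfl | rfl | hbB
      · exact (hBfacts a haB).2.1 ((hadjcomp hv2u (hBfacts a haB).1 hab.symm).symm.trans hv2cv)
      · exact (hBfacts a haB).2.1 ((hadjcomp hwu (hBfacts a haB).1 hab.symm).symm.trans hwcv)
      · have hcc := hadjcomp (hBfacts a haB).1 (hBfacts b hbB).1 hab
        have : a = b := by
          rw [(hBfacts a haB).2.2, (hBfacts b hbB).2.2, hcc]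
        exact hab.ne this
  obtain ⟨M, hSM, hM⟩ := exists_mis G S hSindep
  have hv2M : v2 ∈ M := hSM (Set.mem_insert _ _)
  have hwM : w ∈ M := hSM (Set.mem_insert_of_mem _ (Set.mem_insert _ _))
  have huM : u ∉ M := fun h => hM.1 u h v2 hv2M h2
  have hv1M : v1 ∉ M := fun h => hM.1 v1 h w hwM hw1
  have hfM : ∀ c, P c → c ≠ cv → f c ∉ M := by
    intro c hPc hne h
    have hgB : g (f c) ∈ B := ⟨c, ⟨hPc, hne⟩, rfl⟩
    exact hM.1 (f c) h (g (f c))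
      (hSM (Set.mem_insert_of_mem _ (Set.mem_insert_of_mem _ hgB)))
      (hg (f c) (hf c ⟨hPc, hne⟩).1).1
  set D : Set (Sym2 V) := {e | ∃ m ∈ M, e = s(u, m)} with hDdef
  set H : SimpleGraph V := G.deleteEdges D with hHdef
  have hHle : H ≤ G := G.deleteEdges_le D
  have hG'H : G' ≤ H := by
    apply deleteEdges_anti
    rintro e ⟨m, _, rfl⟩
    simp
  have hkeep : ∀ y, G.Adj u y → y ∉ M → H.Adj u y := by
    intro y hy hyM
    rw [hHdef, deleteEdges_adj]
    refine ⟨hy, ?_⟩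
    rintro ⟨m, hm, he⟩
    rcases Sym2.eq_iff.mp he with ⟨-, rfl⟩ | ⟨rfl, rfl⟩
    · exact hyM hm
    · exact huM hm
  have hdel : ∀ m ∈ M, ¬ H.Adj u m := by
    intro m hm hadj
    rw [hHdef, deleteEdges_adj] at hadj
    exact hadj.2 ⟨m, hm, rfl⟩
  have hreach : ∀ z : V, H.Reachable z u := by
    intro z
    rcases eq_or_ne z u with rfl | hz
    · exact Reachable.refl z
    · obtain ⟨q⟩ := hconn.preconnected z u
      obtain ⟨y, hy, hry⟩ := walk_aux G q hz
      rw [← hG'def] at hry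
      have hryH : H.Reachable z y := hry.mono hG'H
      by_cases hc : mkc y = cv
      · have h3 : G'.Reachable y v1 := ConnectedComponent.eq.mp hc
        exact hryH.trans ((h3.mono hG'H).trans (hkeep v1 h1 hv1M).symm.reachable)
      · have hPc : P (mkc y) := ⟨y, hy, rfl⟩
        obtain ⟨hfa, hfc⟩ := hf (mkc y) ⟨hPc, hc⟩
        have h3 : G'.Reachable y (f (mkc y)) := (ConnectedComponent.eq.mp hfc).symm
        exact hryH.trans ((h3.mono hG'H).trans
          (hkeep _ hfa (hfM _ hPc hc)).symm.reachable)
  have hHconn : H.Connected :=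
    (connected_iff H).mpr ⟨fun a b => (hreach a).trans (hreach b).symm, ⟨u⟩⟩
  have hmisH := hrob M hM H hHle hHconn
  have hind : Indep H (insert u M) := by
    intro a ha b hb hab
    rcases ha with rfl | ha
    · rcases hb with rfl | hb
      · exact hab.ne rfl
      · exact hdel b hb hab
    · rcases hb with rfl | hb
      · exact hdel a ha hab.symm
      · exact hM.1 a ha b hb (hHle hab)
  have heq := hmisH.2 (insert u M) hind (Set.subset_insert u M)
  exact huM (heq ▸ Set.mem_insert u M)

theorem stmt_19 (G : SimpleGraph V) (hconn : G.Connected)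
    (hrob : ∀ M : Set V, IsMIS G M → RobustMIS G M)
    (u : V) (p : G.Walk u u) (hp : p.IsCycle)
    (hpend : ¬ HasPendantNeighbor G u)
    (v1 v2 : V) (h1 : G.Adj u v1) (h2 : G.Adj u v2)
    (hcomp : ∃ x, x ∈ p.support ∧ x ≠ u ∧
      (G.deleteEdges {e : Sym2 V | u ∈ e}).Reachable v1 x ∧
      (G.deleteEdges {e : Sym2 V | u ∈ e}).Reachable v2 x) :
    G.neighborSet v1 = G.neighborSet v2 := by
  obtain ⟨x, -, -, hrx1, hrx2⟩ := hcomp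
  have hr : (G.deleteEdges {e : Sym2 V | u ∈ e}).Reachable v1 v2 := hrx1.trans hrx2.symm
  ext y
  simp only [mem_neighborSet]
  constructor
  · intro hy
    by_contra hy2
    exact key G hconn hrob u v1 v2 y hpend h1 h2 hr hy hy2
  · intro hy
    by_contra hy1
    exact key G hconn hrob u v2 v1 y hpend h2 h1 hr.symm hy hy1
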